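/- For a matroid M on a totally ordered ground set, the Tutte polynomial satisfies the convolution formula T(M;x,y) = Σ_F T(M/F;x,0)·T(M|F;0,y), where the sum ranges over all cyclic flats F of M. -/
import Mathlib


noncomputable section
attribute [local instance] Classical.propDecidable

namespace TutteActivities

variable {α : Type*} [DecidableEq α]

/-- `ℬ` is the family of bases of a matroid on ground set `E`:
nonempty, contained in `E`, and satisfying the basis-exchange axiom. -/
def IsMatroidOn (E : Finset α) (ℬ : Finset (Finset α)) : Prop :=
  ℬ.Nonempty ∧ (∀ B ∈ ℬ, B ⊆ E) ∧
    ∀ B₁ ∈ ℬ, ∀ B₂ ∈ ℬ, ∀ e ∈ B₁ \ B₂, ∃ f ∈ B₂ \ B₁, insert f (B₁.erase e) ∈ ℬ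

/-- A set is independent if it is contained in a basis. -/
def Indep (ℬ : Finset (Finset α)) (S : Finset α) : Prop := ∃ B ∈ ℬ, S ⊆ B

/-- A circuit is a minimal dependent subset of the ground set. -/
def Circuit (E : Finset α) (ℬ : Finset (Finset α)) (C : Finset α) : Prop :=
  C ⊆ E ∧ ¬ Indep ℬ C ∧ ∀ D ⊂ C, Indep ℬ D

/-- A cocircuit is a minimal subset of the ground set meeting every basis. -/
def Cocircuit (E : Finset α) (ℬ : Finset (Finset α)) (C : Finset α) : Prop :=
  C ⊆ E ∧ (∀ B ∈ ℬ, (B ∩ C).Nonempty) ∧ ∀ D ⊂ C, ∃ B ∈ ℬ, B ∩ D = ∅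

/-- The rank of a set `A`: the largest size of the intersection of a basis with `A`. -/
def rank (ℬ : Finset (Finset α)) (A : Finset α) : ℕ := ℬ.sup fun B => (B ∩ A).card

/-- `e` is the minimum element of `C` with respect to the order given by labels `σ`. -/
def IsMinOf (σ : α → ℕ) (e : α) (C : Finset α) : Prop := e ∈ C ∧ ∀ g ∈ C, σ e ≤ σ g

/-- `f ∉ B` is externally active: `f` is the minimum of the fundamental circuit of `f`,
i.e. of a circuit contained in `B ∪ {f}`. -/
def ExtActive (E : Finset α) (ℬ : Finset (Finset α)) (σ : α → ℕ) (B : Finset α) (f : α) :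
    Prop :=
  f ∉ B ∧ ∃ C, Circuit E ℬ C ∧ C ⊆ insert f B ∧ IsMinOf σ f C

/-- `e ∈ B` is internally active: `e` is the minimum of the fundamental cocircuit of `e`,
i.e. of a cocircuit contained in `(E \ B) ∪ {e}`. -/
def IntActive (E : Finset α) (ℬ : Finset (Finset α)) (σ : α → ℕ) (B : Finset α) (e : α) :
    Prop :=
  e ∈ B ∧ ∃ C, Cocircuit E ℬ C ∧ C ⊆ insert e (E \ B) ∧ IsMinOf σ e C

/-- The set of externally active elements of a basis `B`. -/
def extSet (E : Finset α) (ℬ : Finset (Finset α)) (σ : α → ℕ) (B : Finset α) : Finset α :=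
  E.filter (ExtActive E ℬ σ B)

/-- The set of internally active elements of a basis `B`. -/
def intSet (E : Finset α) (ℬ : Finset (Finset α)) (σ : α → ℕ) (B : Finset α) : Finset α :=
  E.filter (IntActive E ℬ σ B)

/-- The Tutte polynomial via Whitney's corank-nullity expansion. -/
def tutte (E : Finset α) (ℬ : Finset (Finset α)) (x y : ℤ) : ℤ :=
  ∑ A ∈ E.powerset, (x - 1) ^ (rank ℬ E - rank ℬ A) * (y - 1) ^ (A.card - rank ℬ A)

/-- Bases of the restriction `M|F`: maximal independent subsets of `F`. -/
def restrBases (ℬ : Finset (Finset α)) (F : Finset α) : Finset (Finset α) :=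
  F.powerset.filter fun S => Indep ℬ S ∧ ∀ g ∈ F, g ∉ S → ¬ Indep ℬ (insert g S)

/-- Bases of the contraction `M/F`. -/
def contrBases (E : Finset α) (ℬ : Finset (Finset α)) (F : Finset α) :
    Finset (Finset α) :=
  (E \ F).powerset.filter fun S => ∃ J ∈ restrBases ℬ F, S ∪ J ∈ ℬ

/-- A flat: a rank-closed subset of the ground set. -/
def Flat (E : Finset α) (ℬ : Finset (Finset α)) (F : Finset α) : Prop :=
  F ⊆ E ∧ ∀ e ∈ E \ F, rank ℬ (insert e F) ≠ rank ℬ F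

/-- A cyclic flat: a flat that is a union of circuits. -/
def CyclicFlat (E : Finset α) (ℬ : Finset (Finset α)) (F : Finset α) : Prop :=
  Flat E ℬ F ∧ ∀ e ∈ F, ∃ C, Circuit E ℬ C ∧ C ⊆ F ∧ e ∈ C

set_option linter.unusedSectionVars false

section Aux

variable {E : Finset α} {ℬ : Finset (Finset α)}

lemma indep_empty (h : ℬ.Nonempty) : Indep ℬ (∅ : Finset α) := by
  obtain ⟨B, hB⟩ := h; exact ⟨B, hB, Finset.empty_subset _⟩

lemma indep_subset {I J : Finset α} (hI : Indep ℬ I) (hJI : J ⊆ I) : Indep ℬ J := by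
  obtain ⟨B, hB, hIB⟩ := hI; exact ⟨B, hB, hJI.trans hIB⟩

lemma basis_card_eq (hM : IsMatroidOn E ℬ) {B₁ B₂ : Finset α}
    (h₁ : B₁ ∈ ℬ) (h₂ : B₂ ∈ ℬ) : B₁.card = B₂.card := by
  obtain ⟨-, -, hex⟩ := hM
  suffices H : ∀ n (B₁ B₂ : Finset α), B₁ ∈ ℬ → B₂ ∈ ℬ → (B₁ \ B₂).card = n →
      B₁.card = B₂.card from H _ B₁ B₂ h₁ h₂ rfl
  intro n
  induction n with
  | zero =>
    intro B₁ B₂ h₁ h₂ hc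
    have hsub : B₁ ⊆ B₂ := by
      rw [Finset.card_eq_zero, Finset.sdiff_eq_empty_iff_subset] at hc; exact hc
    have : B₂ ⊆ B₁ := by
      intro e he
      by_contra hne
      obtain ⟨f, hf, -⟩ := hex B₂ h₂ B₁ h₁ e (Finset.mem_sdiff.2 ⟨he, hne⟩)
      rw [Finset.mem_sdiff] at hf
      exact hf.2 (hsub hf.1)
    rw [Finset.Subset.antisymm hsub this]
  | succ n ih =>
    intro B₁ B₂ h₁ h₂ hc
    have hne : (B₁ \ B₂).Nonempty := by rw [← Finset.card_pos, hc]; omega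
    obtain ⟨e, he⟩ := hne
    obtain ⟨f, hf, hB'⟩ := hex B₁ h₁ B₂ h₂ e he
    rw [Finset.mem_sdiff] at he hf
    have hfe : f ∉ B₁.erase e := fun h => hf.2 (Finset.mem_of_mem_erase h)
    have hcard : (insert f (B₁.erase e)).card = B₁.card := by
      rw [Finset.card_insert_of_notMem hfe, Finset.card_erase_of_mem he.1]
      have : 0 < B₁.card := Finset.card_pos.2 ⟨e, he.1⟩
      omega
    have hsd : (insert f (B₁.erase e)) \ B₂ = (B₁ \ B₂).erase e := by
      ext g
      simp only [Finset.mem_sdiff, Finset.mem_insert, Finset.mem_erase]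
      constructor
      · rintro ⟨(rfl | ⟨hge, hg⟩), hgB₂⟩
        · exact absurd hf.1 hgB₂
        · exact ⟨hge, hg, hgB₂⟩
      · rintro ⟨hge, hg, hgB₂⟩; exact ⟨Or.inr ⟨hge, hg⟩, hgB₂⟩
    have := ih (insert f (B₁.erase e)) B₂ hB' h₂ (by
      rw [hsd, Finset.card_erase_of_mem (Finset.mem_sdiff.2 he), hc]; rfl)
    omega

lemma exists_basis_between (hM : IsMatroidOn E ℬ) {I B₀ B : Finset α}
    (h₀ : B₀ ∈ ℬ) (hB : B ∈ ℬ) (hI : I ⊆ B₀) :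
    ∃ B' ∈ ℬ, I ⊆ B' ∧ B' ⊆ I ∪ B := by
  obtain ⟨-, -, hex⟩ := hM
  suffices H : ∀ n (B₀ : Finset α), B₀ ∈ ℬ → I ⊆ B₀ → (B₀ \ (I ∪ B)).card = n →
      ∃ B' ∈ ℬ, I ⊆ B' ∧ B' ⊆ I ∪ B from H _ B₀ h₀ hI rfl
  intro n
  induction n with
  | zero =>
    intro B₀ h₀ hI hc
    rw [Finset.card_eq_zero, Finset.sdiff_eq_empty_iff_subset] at hc
    exact ⟨B₀, h₀, hI, hc⟩
  | succ n ih =>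
    intro B₀ h₀ hI hc
    have hne : (B₀ \ (I ∪ B)).Nonempty := by rw [← Finset.card_pos, hc]; omega
    obtain ⟨e, he⟩ := hne
    rw [Finset.mem_sdiff, Finset.mem_union, not_or] at he
    obtain ⟨f, hf, hB'⟩ := hex B₀ h₀ B hB e (Finset.mem_sdiff.2 ⟨he.1, he.2.2⟩)
    rw [Finset.mem_sdiff] at hf
    have hIsub : I ⊆ insert f (B₀.erase e) := by
      intro g hg
      exact Finset.mem_insert.2 (Or.inr (Finset.mem_erase.2
        ⟨fun h => he.2.1 (h ▸ hg), hI hg⟩))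
    have hsd : (insert f (B₀.erase e)) \ (I ∪ B) = (B₀ \ (I ∪ B)).erase e := by
      ext g
      simp only [Finset.mem_sdiff, Finset.mem_insert, Finset.mem_erase, Finset.mem_union,
        not_or]
      constructor
      · rintro ⟨(rfl | ⟨hge, hg⟩), hgI, hgB⟩
        · exact absurd hf.1 hgB
        · exact ⟨hge, hg, hgI, hgB⟩
      · rintro ⟨hge, hg, hgI, hgB⟩; exact ⟨Or.inr ⟨hge, hg⟩, hgI, hgB⟩
    exact ih (insert f (B₀.erase e)) hB' hIsub (by
      rw [hsd, Finset.card_erase_of_mem (by rw [Finset.mem_sdiff, Finset.mem_union]; exact ⟨he.1, not_or.2 he.2⟩), hc]; rfl)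

lemma augment (hM : IsMatroidOn E ℬ) {I₁ I₂ : Finset α}
    (h₁ : Indep ℬ I₁) (h₂ : Indep ℬ I₂) (hcard : I₁.card < I₂.card) :
    ∃ e ∈ I₂ \ I₁, Indep ℬ (insert e I₁) := by
  by_contra hcon
  push_neg at hcon
  obtain ⟨B₁, hB₁, hI₁⟩ := h₁
  obtain ⟨B₂, hB₂, hI₂⟩ := h₂
  obtain ⟨B', hB', hIB', hB'sub⟩ := exists_basis_between hM hB₁ hB₂ hI₁
  have hdisj : ∀ e ∈ I₂ \ I₁, e ∉ B' := by
    intro e he hmem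
    exact hcon e he ⟨B', hB', Finset.insert_subset hmem hIB'⟩
  have hsub2 : B' ∪ (I₂ \ I₁) ⊆ I₁ ∪ B₂ := by
    apply Finset.union_subset hB'sub
    intro e he
    exact Finset.mem_union_right _ (hI₂ (Finset.mem_sdiff.1 he).1)
  have hdisj2 : Disjoint B' (I₂ \ I₁) := by
    rw [Finset.disjoint_right]; intro e he; exact hdisj e he
  have h1 : B'.card + (I₂ \ I₁).card ≤ (I₁ ∪ B₂).card := by
    rw [← Finset.card_union_of_disjoint hdisj2]
    exact Finset.card_le_card hsub2
  have h2 : (I₁ ∪ B₂).card ≤ (I₁ \ I₂).card + B₂.card := by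
    have : I₁ ∪ B₂ ⊆ (I₁ \ I₂) ∪ B₂ := by
      intro g hg
      rcases Finset.mem_union.1 hg with hg | hg
      · by_cases hg2 : g ∈ I₂
        · exact Finset.mem_union_right _ (hI₂ hg2)
        · exact Finset.mem_union_left _ (Finset.mem_sdiff.2 ⟨hg, hg2⟩)
      · exact Finset.mem_union_right _ hg
    calc (I₁ ∪ B₂).card ≤ ((I₁ \ I₂) ∪ B₂).card := Finset.card_le_card this
      _ ≤ _ := Finset.card_union_le _ _
  have hBB : B'.card = B₂.card := basis_card_eq hM hB' hB₂
  have e1 : I₁.card = (I₁ \ I₂).card + (I₁ ∩ I₂).card := by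
    rw [Finset.card_sdiff_add_card_inter]
  have e2 : I₂.card = (I₂ \ I₁).card + (I₂ ∩ I₁).card := by
    rw [Finset.card_sdiff_add_card_inter]
  rw [Finset.inter_comm] at e2
  omega

end Aux
section Aux2

variable {E : Finset α} {ℬ : Finset (Finset α)}

lemma rank_mono {A A' : Finset α} (h : A ⊆ A') : rank ℬ A ≤ rank ℬ A' :=
  Finset.sup_mono_fun fun B _ => Finset.card_le_card (Finset.inter_subset_inter (le_refl _) h)

lemma rank_le_card (ℬ : Finset (Finset α)) (A : Finset α) : rank ℬ A ≤ A.card :=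
  Finset.sup_le fun B _ => Finset.card_le_card Finset.inter_subset_right

lemma le_rank {B A : Finset α} (hB : B ∈ ℬ) : (B ∩ A).card ≤ rank ℬ A :=
  Finset.le_sup (f := fun B => (B ∩ A).card) hB

lemma indep_card_le_rank {I A : Finset α} (hI : Indep ℬ I) (hIA : I ⊆ A) :
    I.card ≤ rank ℬ A := by
  obtain ⟨B, hB, hIB⟩ := hI
  calc I.card ≤ (B ∩ A).card :=
        Finset.card_le_card (Finset.subset_inter hIB hIA)
    _ ≤ rank ℬ A := le_rank hB

lemma exists_rank_attained (h : ℬ.Nonempty) (A : Finset α) :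
    ∃ B ∈ ℬ, rank ℬ A = (B ∩ A).card := by
  obtain ⟨B, hB, hval⟩ := Finset.exists_mem_eq_sup ℬ h fun B => (B ∩ A).card
  exact ⟨B, hB, hval⟩

lemma exists_restr_basis_superset (h : ℬ.Nonempty) {F I : Finset α}
    (hIF : I ⊆ F) (hI : Indep ℬ I) : ∃ J ∈ restrBases ℬ F, I ⊆ J := by
  suffices H : ∀ n (I : Finset α), (F \ I).card ≤ n → I ⊆ F → Indep ℬ I →
      ∃ J ∈ restrBases ℬ F, I ⊆ J from H _ I le_rfl hIF hI
  intro n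
  induction n with
  | zero =>
    intro I hc hIF hI
    refine ⟨I, ?_, le_refl _⟩
    rw [restrBases, Finset.mem_filter, Finset.mem_powerset]
    refine ⟨hIF, hI, fun g hg hgI => ?_⟩
    exfalso
    have : g ∈ F \ I := Finset.mem_sdiff.2 ⟨hg, hgI⟩
    have := Finset.card_pos.2 ⟨g, this⟩
    omega
  | succ n ih =>
    intro I hc hIF hI
    by_cases hmax : ∀ g ∈ F, g ∉ I → ¬ Indep ℬ (insert g I)
    · refine ⟨I, ?_, le_refl _⟩
      rw [restrBases, Finset.mem_filter, Finset.mem_powerset]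
      exact ⟨hIF, hI, hmax⟩
    · push_neg at hmax
      obtain ⟨g, hgF, hgI, hind⟩ := hmax
      have hc' : (F \ insert g I).card ≤ n := by
        have : F \ insert g I = (F \ I).erase g := by
          ext u
          simp only [Finset.mem_sdiff, Finset.mem_insert, Finset.mem_erase, not_or]
          tauto
        rw [this, Finset.card_erase_of_mem (Finset.mem_sdiff.2 ⟨hgF, hgI⟩)]
        omega
      obtain ⟨J, hJ, hsub⟩ := ih (insert g I) hc' (Finset.insert_subset hgF hIF) hind
      exact ⟨J, hJ, (Finset.subset_insert _ _).trans hsub⟩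

lemma restrBases_nonempty (h : ℬ.Nonempty) (F : Finset α) :
    (restrBases ℬ F).Nonempty := by
  obtain ⟨J, hJ, -⟩ := exists_restr_basis_superset h (Finset.empty_subset F) (indep_empty h)
  exact ⟨J, hJ⟩

lemma mem_restrBases {F J : Finset α} :
    J ∈ restrBases ℬ F ↔ J ⊆ F ∧ Indep ℬ J ∧ ∀ g ∈ F, g ∉ J → ¬ Indep ℬ (insert g J) := by
  rw [restrBases, Finset.mem_filter, Finset.mem_powerset]

lemma restrBases_card (hM : IsMatroidOn E ℬ) {F J : Finset α}
    (hJ : J ∈ restrBases ℬ F) : J.card = rank ℬ F := by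
  rw [mem_restrBases] at hJ
  obtain ⟨hJF, hJind, hJmax⟩ := hJ
  have hle : J.card ≤ rank ℬ F := indep_card_le_rank hJind hJF
  rcases eq_or_lt_of_le hle with h | h
  · exact h
  exfalso
  obtain ⟨B, hB, hr⟩ := exists_rank_attained hM.1 F
  have hind : Indep ℬ (B ∩ F) := ⟨B, hB, Finset.inter_subset_left⟩
  obtain ⟨e, he, hins⟩ := augment hM hJind hind (by omega)
  rw [Finset.mem_sdiff, Finset.mem_inter] at he
  exact hJmax e he.1.2 he.2 hins

lemma rank_restr (hM : IsMatroidOn E ℬ) {F S : Finset α} (hSF : S ⊆ F) :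
    rank (restrBases ℬ F) S = rank ℬ S := by
  apply le_antisymm
  · apply Finset.sup_le
    intro J hJ
    rw [mem_restrBases] at hJ
    exact indep_card_le_rank (indep_subset hJ.2.1 Finset.inter_subset_left)
      Finset.inter_subset_right
  · obtain ⟨B, hB, hr⟩ := exists_rank_attained hM.1 S
    have hind : Indep ℬ (B ∩ S) := ⟨B, hB, Finset.inter_subset_left⟩
    obtain ⟨J, hJ, hsub⟩ := exists_restr_basis_superset hM.1
      (Finset.inter_subset_right.trans hSF) hind
    calc rank ℬ S = (B ∩ S).card := hr
      _ ≤ (J ∩ S).card := Finset.card_le_card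
          (Finset.subset_inter hsub Finset.inter_subset_right)
      _ ≤ _ := le_rank hJ

lemma basis_inter_eq (hM : IsMatroidOn E ℬ) {F J B : Finset α}
    (hJ : J ∈ restrBases ℬ F) (hB : B ∈ ℬ) (hJB : J ⊆ B) : B ∩ F = J := by
  rw [mem_restrBases] at hJ
  apply Finset.Subset.antisymm
  · intro g hg
    rw [Finset.mem_inter] at hg
    by_contra hgJ
    exact hJ.2.2 g hg.2 hgJ ⟨B, hB, Finset.insert_subset hg.1 hJB⟩
  · exact Finset.subset_inter hJB hJ.1

lemma mem_contrBases {F S : Finset α} :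
    S ∈ contrBases E ℬ F ↔ S ⊆ E \ F ∧ ∃ J ∈ restrBases ℬ F, S ∪ J ∈ ℬ := by
  rw [contrBases, Finset.mem_filter, Finset.mem_powerset]

lemma rank_contr (hM : IsMatroidOn E ℬ) {F A : Finset α} (hF : F ⊆ E)
    (hA : A ⊆ E \ F) :
    rank (contrBases E ℬ F) A = rank ℬ (A ∪ F) - rank ℬ F := by
  apply le_antisymm
  · apply Finset.sup_le
    intro S hS
    rw [mem_contrBases] at hS
    obtain ⟨hSE, J, hJ, hSJ⟩ := hS
    have hJcard : J.card = rank ℬ F := restrBases_card hM hJ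
    have hJF : J ⊆ F := (mem_restrBases.1 hJ).1
    have hdisj : Disjoint (S ∩ A) J := by
      rw [Finset.disjoint_left]
      intro g hg hgJ
      have := hSE (Finset.mem_inter.1 hg).1
      rw [Finset.mem_sdiff] at this
      exact this.2 (hJF hgJ)
    have hind : Indep ℬ ((S ∩ A) ∪ J) :=
      ⟨S ∪ J, hSJ, Finset.union_subset_union Finset.inter_subset_left (le_refl _)⟩
    have hsub : (S ∩ A) ∪ J ⊆ A ∪ F :=
      Finset.union_subset_union Finset.inter_subset_right hJF
    have := indep_card_le_rank hind hsub
    rw [Finset.card_union_of_disjoint hdisj, hJcard] at this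
    omega
  · obtain ⟨J, hJ⟩ := restrBases_nonempty hM.1 F
    have hJprop := mem_restrBases.1 hJ
    obtain ⟨K, hK, hJK⟩ := exists_restr_basis_superset hM.1
      (hJprop.1.trans Finset.subset_union_right) hJprop.2.1
    have hKprop := mem_restrBases.1 hK
    have hKcard : K.card = rank ℬ (A ∪ F) := restrBases_card hM hK
    obtain ⟨B₀, hB₀, hKB₀⟩ := hKprop.2.1
    have hBF : B₀ ∩ F = J := basis_inter_eq hM hJ hB₀ (hJK.trans hKB₀)
    have hKF : K ∩ F = J := by
      apply Finset.Subset.antisymm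
      · rw [← hBF]
        exact Finset.inter_subset_inter hKB₀ (le_refl _)
      · exact Finset.subset_inter hJK hJprop.1
    have hSmem : B₀ \ F ∈ contrBases E ℬ F := by
      rw [mem_contrBases]
      refine ⟨?_, J, hJ, ?_⟩
      · intro g hg
        rw [Finset.mem_sdiff] at hg ⊢
        exact ⟨hM.2.1 B₀ hB₀ hg.1, hg.2⟩
      · have : B₀ \ F ∪ J = B₀ := by
          rw [← hBF, Finset.sdiff_union_inter]
        rw [this]; exact hB₀
    have hsub : K \ F ⊆ (B₀ \ F) ∩ A := by
      intro g hg
      rw [Finset.mem_sdiff] at hg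
      rw [Finset.mem_inter, Finset.mem_sdiff]
      refine ⟨⟨hKB₀ hg.1, hg.2⟩, ?_⟩
      have := hKprop.1 hg.1
      rw [Finset.mem_union] at this
      tauto
    have hcard : (K \ F).card = rank ℬ (A ∪ F) - rank ℬ F := by
      have h1 : (K \ F).card + (K ∩ F).card = K.card := Finset.card_sdiff_add_card_inter K F
      have hJc : J.card = rank ℬ F := restrBases_card hM hJ
      rw [hKF] at h1
      omega
    calc rank ℬ (A ∪ F) - rank ℬ F = (K \ F).card := hcard.symm
      _ ≤ ((B₀ \ F) ∩ A).card := Finset.card_le_card hsub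
      _ ≤ _ := le_rank hSmem

end Aux2
section Aux3

variable {E : Finset α} {ℬ : Finset (Finset α)}

lemma exists_circuit_of_dep {D : Finset α} (hD : D ⊆ E) (hdep : ¬ Indep ℬ D) :
    ∃ C, Circuit E ℬ C ∧ C ⊆ D := by
  suffices H : ∀ n (D : Finset α), D.card ≤ n → D ⊆ E → ¬ Indep ℬ D →
      ∃ C, Circuit E ℬ C ∧ C ⊆ D from H _ D le_rfl hD hdep
  intro n
  induction n with
  | zero =>
    intro D hc hD hdep
    refine ⟨D, ⟨hD, hdep, fun D' hD' => ?_⟩, le_refl _⟩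
    exfalso
    exact Finset.not_ssubset_empty D' (Finset.card_eq_zero.1 (Nat.le_zero.1 hc) ▸ hD')
  | succ n ih =>
    intro D hc hD hdep
    by_cases hmin : ∀ D' ⊂ D, Indep ℬ D'
    · exact ⟨D, ⟨hD, hdep, hmin⟩, le_refl _⟩
    · push_neg at hmin
      obtain ⟨D', hD'sub, hD'dep⟩ := hmin
      obtain ⟨C, hC, hCD⟩ := ih D' (by
        have := Finset.card_lt_card hD'sub; omega) (hD'sub.subset.trans hD) hD'dep
      exact ⟨C, hC, hCD.trans hD'sub.subset⟩

/-- The pairing/involution lemma for vanishing sums. -/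
lemma sum_powerset_eq_zero {G : Finset α} {w : Finset α → ℤ} {e : α} (he : e ∈ G)
    (hw : ∀ A, A ⊆ G.erase e → w (insert e A) = - w A) :
    ∑ A ∈ G.powerset, w A = 0 := by
  have hG : G = insert e (G.erase e) := (Finset.insert_erase he).symm
  rw [hG, Finset.sum_powerset_insert (Finset.notMem_erase e G)]
  rw [← Finset.sum_add_distrib]
  apply Finset.sum_eq_zero
  intro A hA
  rw [hw A (Finset.mem_powerset.1 hA)]
  ring

/-- If `F` is not a flat, the contraction has a loop and `T(M/F;x,0) = 0`. -/
lemma tutte_contr_eq_zero (hM : IsMatroidOn E ℬ) {F : Finset α} (hF : F ⊆ E)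
    (hflat : ¬ Flat E ℬ F) (x : ℤ) :
    tutte (E \ F) (contrBases E ℬ F) x 0 = 0 := by
  rw [Flat] at hflat
  push_neg at hflat
  obtain ⟨e, heEF, hre⟩ := hflat hF
  have heE := Finset.mem_sdiff.1 heEF
  -- e is a loop of the contraction
  have hloop : ∀ S ∈ contrBases E ℬ F, e ∉ S := by
    intro S hS heS
    rw [mem_contrBases] at hS
    have h1 : rank (contrBases E ℬ F) {e} = rank ℬ ({e} ∪ F) - rank ℬ F := by
      exact rank_contr hM hF (Finset.singleton_subset_iff.2 heEF)
    have h2 : ({e} : Finset α) ∪ F = insert e F := by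
      ext g; simp [Finset.mem_union, Finset.mem_insert]
    rw [h2, hre] at h1
    have h3 : (S ∩ {e}).card ≤ rank (contrBases E ℬ F) {e} :=
      Finset.le_sup (f := fun B => (B ∩ ({e} : Finset α)).card)
        (by rw [mem_contrBases]; exact hS)
    have h4 : e ∈ S ∩ {e} := Finset.mem_inter.2 ⟨heS, Finset.mem_singleton_self e⟩
    have := Finset.card_pos.2 ⟨e, h4⟩
    omega
  -- pairing
  rw [tutte]
  apply sum_powerset_eq_zero heEF
  intro A hA
  have heA : e ∉ A := fun h => Finset.notMem_erase e _ (hA h)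
  have hrr : ∀ A' : Finset α, rank (contrBases E ℬ F) (insert e A') =
      rank (contrBases E ℬ F) A' := by
    intro A'
    apply Finset.sup_congr rfl
    intro S hS
    congr 1
    ext g
    simp only [Finset.mem_inter, Finset.mem_insert]
    constructor
    · rintro ⟨hgS, rfl | hgA⟩
      · exact absurd hgS (hloop S hS)
      · exact ⟨hgS, hgA⟩
    · rintro ⟨hgS, hgA⟩; exact ⟨hgS, Or.inr hgA⟩
  rw [hrr A, Finset.card_insert_of_notMem heA]
  have hrA : rank (contrBases E ℬ F) A ≤ A.card := rank_le_card _ _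
  have : A.card + 1 - rank (contrBases E ℬ F) A
      = (A.card - rank (contrBases E ℬ F) A) + 1 := by omega
  rw [this, pow_succ]
  ring

/-- If `F` is a flat that is not cyclic, the restriction has a coloop and `T(M|F;0,y) = 0`. -/
lemma tutte_restr_eq_zero (hM : IsMatroidOn E ℬ) {F : Finset α} (hF : F ⊆ E)
    (hcyc : ¬ (∀ e ∈ F, ∃ C, Circuit E ℬ C ∧ C ⊆ F ∧ e ∈ C)) (y : ℤ) :
    tutte F (restrBases ℬ F) 0 y = 0 := by
  push_neg at hcyc
  obtain ⟨e, heF, hnoC⟩ := hcyc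
  -- e is a coloop of the restriction: e belongs to every maximal independent subset of F
  have hcoloop : ∀ J ∈ restrBases ℬ F, e ∈ J := by
    intro J hJ
    by_contra heJ
    have hJp := mem_restrBases.1 hJ
    have hdep : ¬ Indep ℬ (insert e J) := hJp.2.2 e heF heJ
    obtain ⟨C, hC, hCsub⟩ := exists_circuit_of_dep
      ((Finset.insert_subset heF hJp.1).trans hF) hdep
    have heC : e ∈ C := by
      by_contra heC
      have : C ⊆ J := fun g hg => by
        rcases Finset.mem_insert.1 (hCsub hg) with rfl | h
        · exact absurd hg heC
        · exact h
      exact hC.2.1 (indep_subset hJp.2.1 this)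
    exact hnoC C hC (hCsub.trans (Finset.insert_subset heF hJp.1)) heC
  -- rank of restriction jumps by 1 when adding e
  have hne : (restrBases ℬ F).Nonempty := restrBases_nonempty hM.1 F
  have hrr : ∀ A : Finset α, e ∉ A →
      rank (restrBases ℬ F) (insert e A) = rank (restrBases ℬ F) A + 1 := by
    intro A heA
    have key : ∀ J ∈ restrBases ℬ F, (J ∩ insert e A).card = (J ∩ A).card + 1 := by
      intro J hJ
      have : J ∩ insert e A = insert e (J ∩ A) := by
        ext g
        simp only [Finset.mem_inter, Finset.mem_insert]
        constructor
        · rintro ⟨hgJ, rfl | hgA⟩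
          · exact Or.inl rfl
          · exact Or.inr ⟨hgJ, hgA⟩
        · rintro (rfl | ⟨hgJ, hgA⟩)
          · exact ⟨hcoloop J hJ, Or.inl rfl⟩
          · exact ⟨hgJ, Or.inr hgA⟩
      rw [this, Finset.card_insert_of_notMem (fun h => heA (Finset.mem_inter.1 h).2)]
    apply le_antisymm
    · apply Finset.sup_le
      intro J hJ
      rw [key J hJ]
      have : (J ∩ A).card ≤ rank (restrBases ℬ F) A :=
        Finset.le_sup (f := fun B => (B ∩ A).card) hJ
      omega
    · obtain ⟨J, hJ, hval⟩ := exists_rank_attained hne A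
      rw [hval, ← key J hJ]
      exact Finset.le_sup (f := fun B => (B ∩ insert e A).card) hJ
  -- pairing
  rw [tutte]
  apply sum_powerset_eq_zero heF
  intro A hA
  have heA : e ∉ A := fun h => Finset.notMem_erase e _ (hA h)
  have hAF : A ⊆ F := (hA.trans (Finset.erase_subset e F))
  rw [hrr A heA, Finset.card_insert_of_notMem heA]
  have hle : rank (restrBases ℬ F) A + 1 ≤ rank (restrBases ℬ F) F := by
    rw [← hrr A heA]
    exact rank_mono (Finset.insert_subset heF hAF)
  have h1 : A.card + 1 - (rank (restrBases ℬ F) A + 1)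
      = A.card - rank (restrBases ℬ F) A := by omega
  have h2 : rank (restrBases ℬ F) F - (rank (restrBases ℬ F) A + 1) + 1
      = rank (restrBases ℬ F) F - rank (restrBases ℬ F) A := by omega
  rw [h1]
  have h3 : rank (restrBases ℬ F) F - rank (restrBases ℬ F) A
      = (rank (restrBases ℬ F) F - (rank (restrBases ℬ F) A + 1)) + 1 := by omega
  rw [h3, pow_succ]
  ring

end Aux3
section Aux4

variable {E : Finset α} {ℬ : Finset (Finset α)}

lemma neg_one_pow_sub {a b : ℕ} (h : b ≤ a) :
    (-1 : ℤ) ^ (a - b) = (-1) ^ a * (-1) ^ b := by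
  have hab : a + b = (a - b) + 2 * b := by omega
  calc (-1 : ℤ) ^ (a - b) = (-1 : ℤ) ^ (a - b) * ((-1 : ℤ) ^ 2) ^ b := by norm_num
    _ = (-1 : ℤ) ^ ((a - b) + 2 * b) := by rw [pow_add, pow_mul]
    _ = (-1) ^ a * (-1) ^ b := by rw [← hab, pow_add]

lemma rank_union_le_card_add (ℬ : Finset (Finset α)) (U F : Finset α) :
    rank ℬ (U ∪ F) ≤ U.card + rank ℬ F := by
  apply Finset.sup_le
  intro B hB
  calc (B ∩ (U ∪ F)).card = ((B ∩ U) ∪ (B ∩ F)).card := by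
        rw [Finset.inter_union_distrib_left]
    _ ≤ (B ∩ U).card + (B ∩ F).card := Finset.card_union_le _ _
    _ ≤ U.card + rank ℬ F :=
        Nat.add_le_add (Finset.card_le_card Finset.inter_subset_right) (le_rank hB)

/-- The summand in the triple-sum expansion. -/
def gTerm (ℬ : Finset (Finset α)) (E : Finset α) (x y : ℤ) (T F S : Finset α) : ℤ :=
  (x - 1) ^ (rank ℬ E - rank ℬ T) * (y - 1) ^ (S.card - rank ℬ S) *
    ((-1) ^ (rank ℬ T) * (-1) ^ (rank ℬ S) * (-1) ^ (T.card - F.card))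

lemma tutte_contr_expand (hM : IsMatroidOn E ℬ) {F : Finset α} (hF : F ⊆ E) (x : ℤ) :
    tutte (E \ F) (contrBases E ℬ F) x 0 =
      ∑ U ∈ (E \ F).powerset, (x - 1) ^ (rank ℬ E - rank ℬ (U ∪ F)) *
        ((-1 : ℤ) ^ U.card * (-1) ^ (rank ℬ (U ∪ F)) * (-1) ^ (rank ℬ F)) := by
  rw [tutte]
  apply Finset.sum_congr rfl
  intro U hU
  have hU' : U ⊆ E \ F := Finset.mem_powerset.1 hU
  have hg : rank (contrBases E ℬ F) (E \ F) = rank ℬ E - rank ℬ F := by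
    rw [rank_contr hM hF (le_refl _), Finset.sdiff_union_of_subset hF]
  rw [hg, rank_contr hM hF hU']
  have h1 : rank ℬ F ≤ rank ℬ (U ∪ F) := rank_mono Finset.subset_union_right
  have h2 : rank ℬ (U ∪ F) ≤ rank ℬ E := by
    apply rank_mono
    apply Finset.union_subset (hU'.trans (Finset.sdiff_subset)) hF
  have h3 : rank ℬ (U ∪ F) ≤ U.card + rank ℬ F := rank_union_le_card_add ℬ U F
  have e1 : rank ℬ E - rank ℬ F - (rank ℬ (U ∪ F) - rank ℬ F)
      = rank ℬ E - rank ℬ (U ∪ F) := by omega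
  have e2 : rank ℬ (U ∪ F) - rank ℬ F ≤ U.card := by omega
  rw [e1]
  have : (0 - 1 : ℤ) ^ (U.card - (rank ℬ (U ∪ F) - rank ℬ F))
      = (-1 : ℤ) ^ U.card * (-1) ^ (rank ℬ (U ∪ F)) * (-1) ^ (rank ℬ F) := by
    rw [show (0 - 1 : ℤ) = -1 by norm_num, neg_one_pow_sub e2, neg_one_pow_sub h1]
    ring
  rw [this]

lemma tutte_restr_expand (hM : IsMatroidOn E ℬ) {F : Finset α} (y : ℤ) :
    tutte F (restrBases ℬ F) 0 y =
      ∑ S ∈ F.powerset, (y - 1) ^ (S.card - rank ℬ S) *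
        ((-1 : ℤ) ^ (rank ℬ F) * (-1) ^ (rank ℬ S)) := by
  rw [tutte]
  apply Finset.sum_congr rfl
  intro S hS
  have hS' : S ⊆ F := Finset.mem_powerset.1 hS
  rw [rank_restr hM (le_refl F), rank_restr hM hS']
  have h1 : rank ℬ S ≤ rank ℬ F := rank_mono hS'
  rw [show (0 - 1 : ℤ) = -1 by norm_num, neg_one_pow_sub h1]
  ring

lemma product_expand (hM : IsMatroidOn E ℬ) {F : Finset α} (hF : F ⊆ E) (x y : ℤ) :
    tutte (E \ F) (contrBases E ℬ F) x 0 * tutte F (restrBases ℬ F) 0 y =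
      ∑ U ∈ (E \ F).powerset, ∑ S ∈ F.powerset, gTerm ℬ E x y (U ∪ F) F S := by
  rw [tutte_contr_expand hM hF x, tutte_restr_expand hM y, Finset.sum_mul_sum]
  apply Finset.sum_congr rfl
  intro U hU
  apply Finset.sum_congr rfl
  intro S hS
  have hU' : U ⊆ E \ F := Finset.mem_powerset.1 hU
  have hdisj : Disjoint U F := by
    rw [Finset.disjoint_left]
    intro g hg hgF
    exact (Finset.mem_sdiff.1 (hU' hg)).2 hgF
  have hcard : (U ∪ F).card = U.card + F.card := Finset.card_union_of_disjoint hdisj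
  rw [gTerm, show (U ∪ F).card - F.card = U.card from by omega]
  have h1 : (-1 : ℤ) ^ (rank ℬ F) * (-1) ^ (rank ℬ F) = 1 := by
    rw [← pow_add]
    exact Even.neg_one_pow ⟨rank ℬ F, by ring⟩
  linear_combination ((x - 1) ^ (rank ℬ E - rank ℬ (U ∪ F)) *
    (y - 1) ^ (S.card - rank ℬ S) * (-1 : ℤ) ^ (rank ℬ (U ∪ F)) * (-1) ^ (rank ℬ S) *
    (-1) ^ U.card) * h1

lemma powerset_filter_subset {T E : Finset α} (hT : T ⊆ E) :
    E.powerset.filter (fun F => F ⊆ T) = T.powerset := by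
  ext F
  simp only [Finset.mem_filter, Finset.mem_powerset]
  exact ⟨fun h => h.2, fun h => ⟨h.trans hT, h⟩⟩

lemma triple_swap (h : Finset α → Finset α → ℤ) :
    ∑ F ∈ E.powerset, ∑ U ∈ (E \ F).powerset, h F (U ∪ F) =
      ∑ T ∈ E.powerset, ∑ F ∈ T.powerset, h F T := by
  have step1 : ∀ F ∈ E.powerset, ∑ U ∈ (E \ F).powerset, h F (U ∪ F) =
      ∑ T ∈ E.powerset.filter (fun T => F ⊆ T), h F T := by
    intro F hF
    have hFE : F ⊆ E := Finset.mem_powerset.1 hF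
    apply Finset.sum_nbij' (i := fun U => U ∪ F) (j := fun T => T \ F)
    · intro U hU
      have hU' : U ⊆ E \ F := Finset.mem_powerset.1 hU
      rw [Finset.mem_filter, Finset.mem_powerset]
      exact ⟨Finset.union_subset (hU'.trans Finset.sdiff_subset) hFE,
        Finset.subset_union_right⟩
    · intro T hT
      rw [Finset.mem_filter, Finset.mem_powerset] at hT
      rw [Finset.mem_powerset]
      exact Finset.sdiff_subset_sdiff hT.1 (le_refl _)
    · intro U hU
      have hU' : U ⊆ E \ F := Finset.mem_powerset.1 hU
      have hdisj : Disjoint U F := by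
        rw [Finset.disjoint_left]
        intro g hg hgF
        exact (Finset.mem_sdiff.1 (hU' hg)).2 hgF
      rw [Finset.union_sdiff_right, Finset.sdiff_eq_self_of_disjoint hdisj]
    · intro T hT
      rw [Finset.mem_filter] at hT
      exact Finset.sdiff_union_of_subset hT.2
    · intro U hU
      rfl
  rw [Finset.sum_congr rfl step1]
  have step2 : ∀ F ∈ E.powerset, ∑ T ∈ E.powerset.filter (fun T => F ⊆ T), h F T =
      ∑ T ∈ E.powerset, if F ⊆ T then h F T else 0 := fun F _ => Finset.sum_filter _ _
  rw [Finset.sum_congr rfl step2, Finset.sum_comm]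
  apply Finset.sum_congr rfl
  intro T hT
  rw [← Finset.sum_filter, powerset_filter_subset (Finset.mem_powerset.1 hT)]

lemma inner_swap (T : Finset α) (k : Finset α → Finset α → ℤ) :
    ∑ F ∈ T.powerset, ∑ S ∈ F.powerset, k F S =
      ∑ S ∈ T.powerset, ∑ F ∈ T.powerset.filter (fun F => S ⊆ F), k F S := by
  have step1 : ∀ F ∈ T.powerset, ∑ S ∈ F.powerset, k F S =
      ∑ S ∈ T.powerset, if S ⊆ F then k F S else 0 := by
    intro F hF
    rw [← Finset.sum_filter, powerset_filter_subset (Finset.mem_powerset.1 hF)]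
  rw [Finset.sum_congr rfl step1, Finset.sum_comm]
  apply Finset.sum_congr rfl
  intro S hS
  rw [← Finset.sum_filter]

lemma sign_sum (S T : Finset α) (hST : S ⊆ T) :
    ∑ F ∈ T.powerset.filter (fun F => S ⊆ F), (-1 : ℤ) ^ (T.card - F.card) =
      if S = T then 1 else 0 := by
  have step1 : ∑ F ∈ T.powerset.filter (fun F => S ⊆ F), (-1 : ℤ) ^ (T.card - F.card) =
      ∑ G ∈ (T \ S).powerset, (-1 : ℤ) ^ ((T \ S).card - G.card) := by
    symm
    apply Finset.sum_nbij' (i := fun G => G ∪ S) (j := fun F => F \ S)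
    · intro G hG
      have hG' : G ⊆ T \ S := Finset.mem_powerset.1 hG
      rw [Finset.mem_filter, Finset.mem_powerset]
      exact ⟨Finset.union_subset (hG'.trans Finset.sdiff_subset) hST,
        Finset.subset_union_right⟩
    · intro F hF
      rw [Finset.mem_filter, Finset.mem_powerset] at hF
      rw [Finset.mem_powerset]
      exact Finset.sdiff_subset_sdiff hF.1 (le_refl _)
    · intro G hG
      have hG' : G ⊆ T \ S := Finset.mem_powerset.1 hG
      have hdisj : Disjoint G S := by
        rw [Finset.disjoint_left]
        intro g hg hgS
        exact (Finset.mem_sdiff.1 (hG' hg)).2 hgS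
      rw [Finset.union_sdiff_right, Finset.sdiff_eq_self_of_disjoint hdisj]
    · intro F hF
      rw [Finset.mem_filter] at hF
      exact Finset.sdiff_union_of_subset hF.2
    · intro G hG
      have hG' : G ⊆ T \ S := Finset.mem_powerset.1 hG
      have hdisj : Disjoint G S := by
        rw [Finset.disjoint_left]
        intro g hg hgS
        exact (Finset.mem_sdiff.1 (hG' hg)).2 hgS
      have hc1 : (G ∪ S).card = G.card + S.card := Finset.card_union_of_disjoint hdisj
      have hc2 : (T \ S).card = T.card - S.card := Finset.card_sdiff_of_subset hST
      have hc3 : S.card ≤ T.card := Finset.card_le_card hST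
      have hc4 : G.card ≤ (T \ S).card := Finset.card_le_card hG'
      have hexp : (T \ S).card - G.card = T.card - (G ∪ S).card := by omega
      rw [hexp]
  rw [step1]
  have step2 : ∀ G ∈ (T \ S).powerset, (-1 : ℤ) ^ ((T \ S).card - G.card) =
      (-1 : ℤ) ^ (T \ S).card * (-1) ^ G.card := by
    intro G hG
    exact neg_one_pow_sub (Finset.card_le_card (Finset.mem_powerset.1 hG))
  rw [Finset.sum_congr rfl step2, ← Finset.mul_sum, Finset.sum_powerset_neg_one_pow_card]
  by_cases h : S = T
  · subst h
    simp
  · have : T \ S ≠ ∅ := by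
      rw [Ne, Finset.sdiff_eq_empty_iff_subset]
      intro hTS
      exact h (Finset.Subset.antisymm hST hTS)
    rw [if_neg this, if_neg h, mul_zero]

end Aux4
/-- The convolution formula: `T(M;x,y) = Σ_F T(M/F;x,0) ⬝ T(M|F;0,y)`,
summed over all cyclic flats `F` of `M`. -/
theorem tutte_convolution_cyclicFlats
    (E : Finset α) (ℬ : Finset (Finset α)) (hM : IsMatroidOn E ℬ) (x y : ℤ) :
    tutte E ℬ x y =
      ∑ F ∈ E.powerset.filter (CyclicFlat E ℬ),
        tutte (E \ F) (contrBases E ℬ F) x 0 * tutte F (restrBases ℬ F) 0 y := by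
  symm
  calc ∑ F ∈ E.powerset.filter (CyclicFlat E ℬ),
        tutte (E \ F) (contrBases E ℬ F) x 0 * tutte F (restrBases ℬ F) 0 y
      = ∑ F ∈ E.powerset,
        tutte (E \ F) (contrBases E ℬ F) x 0 * tutte F (restrBases ℬ F) 0 y := by
        apply Finset.sum_subset (Finset.filter_subset _ _)
        intro F hF hnf
        have hFE : F ⊆ E := Finset.mem_powerset.1 hF
        have hncf : ¬ CyclicFlat E ℬ F := fun h => hnf (Finset.mem_filter.2 ⟨hF, h⟩)
        by_cases hflat : Flat E ℬ F
        · have hnc : ¬ (∀ e ∈ F, ∃ C, Circuit E ℬ C ∧ C ⊆ F ∧ e ∈ C) :=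
            fun h => hncf ⟨hflat, h⟩
          rw [tutte_restr_eq_zero hM hFE hnc y, mul_zero]
        · rw [tutte_contr_eq_zero hM hFE hflat x, zero_mul]
    _ = ∑ F ∈ E.powerset, ∑ U ∈ (E \ F).powerset, ∑ S ∈ F.powerset,
          gTerm ℬ E x y (U ∪ F) F S :=
        Finset.sum_congr rfl fun F hF => product_expand hM (Finset.mem_powerset.1 hF) x y
    _ = ∑ T ∈ E.powerset, ∑ F ∈ T.powerset, ∑ S ∈ F.powerset, gTerm ℬ E x y T F S :=
        by exact triple_swap (fun F T => ∑ S ∈ F.powerset, gTerm ℬ E x y T F S)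
    _ = ∑ T ∈ E.powerset, ∑ S ∈ T.powerset,
          ∑ F ∈ T.powerset.filter (fun F => S ⊆ F), gTerm ℬ E x y T F S :=
        Finset.sum_congr rfl fun T _ => by exact inner_swap T (fun F S => gTerm ℬ E x y T F S)
    _ = ∑ T ∈ E.powerset, ∑ S ∈ T.powerset,
          (if S = T then (x - 1) ^ (rank ℬ E - rank ℬ T) *
            (y - 1) ^ (S.card - rank ℬ S) *
            ((-1 : ℤ) ^ (rank ℬ T) * (-1) ^ (rank ℬ S)) else 0) := by
        apply Finset.sum_congr rfl
        intro T hT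
        apply Finset.sum_congr rfl
        intro S hS
        have hST : S ⊆ T := Finset.mem_powerset.1 hS
        calc ∑ F ∈ T.powerset.filter (fun F => S ⊆ F), gTerm ℬ E x y T F S
            = ∑ F ∈ T.powerset.filter (fun F => S ⊆ F),
              ((x - 1) ^ (rank ℬ E - rank ℬ T) * (y - 1) ^ (S.card - rank ℬ S) *
                ((-1 : ℤ) ^ (rank ℬ T) * (-1) ^ (rank ℬ S))) *
                (-1) ^ (T.card - F.card) :=
              Finset.sum_congr rfl fun F _ => by rw [gTerm]; ring
          _ = ((x - 1) ^ (rank ℬ E - rank ℬ T) * (y - 1) ^ (S.card - rank ℬ S) *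
                ((-1 : ℤ) ^ (rank ℬ T) * (-1) ^ (rank ℬ S))) *
              ∑ F ∈ T.powerset.filter (fun F => S ⊆ F), (-1 : ℤ) ^ (T.card - F.card) :=
              (Finset.mul_sum _ _ _).symm
          _ = ((x - 1) ^ (rank ℬ E - rank ℬ T) * (y - 1) ^ (S.card - rank ℬ S) *
                ((-1 : ℤ) ^ (rank ℬ T) * (-1) ^ (rank ℬ S))) *
              (if S = T then 1 else 0) := by rw [sign_sum S T hST]
          _ = _ := by rw [mul_ite, mul_one, mul_zero]
    _ = ∑ T ∈ E.powerset, (x - 1) ^ (rank ℬ E - rank ℬ T) *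
          (y - 1) ^ (T.card - rank ℬ T) *
          ((-1 : ℤ) ^ (rank ℬ T) * (-1) ^ (rank ℬ T)) := by
        apply Finset.sum_congr rfl
        intro T hT
        rw [Finset.sum_ite_eq' T.powerset T
          (fun S => (x - 1) ^ (rank ℬ E - rank ℬ T) * (y - 1) ^ (S.card - rank ℬ S) *
            ((-1 : ℤ) ^ (rank ℬ T) * (-1) ^ (rank ℬ S))),
          if_pos (Finset.mem_powerset_self T)]
    _ = ∑ T ∈ E.powerset, (x - 1) ^ (rank ℬ E - rank ℬ T) *
          (y - 1) ^ (T.card - rank ℬ T) := by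
        apply Finset.sum_congr rfl
        intro T hT
        have h1 : (-1 : ℤ) ^ (rank ℬ T) * (-1) ^ (rank ℬ T) = 1 := by
          rw [← pow_add]
          exact Even.neg_one_pow ⟨rank ℬ T, by ring⟩
        rw [h1, mul_one]
    _ = tutte E ℬ x y := by rw [tutte]

end TutteActivities
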